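/- arXiv:1903.09352 — 3 statements merged into one kernel-verified Lean document; each statement's English description precedes it below -/
import Mathlib

section
/- Let A be a finite set of real numbers that is 2-regular, and let l ≥ 2 be an integer. Then A has a (1 + 1/l)-regular subset A' with |A'| ≥ |A| / (4l + 2). -/
open scoped Classical

/-- `a` and `b` are consecutive elements of the finite set `A` of reals. -/
def ConsecIn (A : Finset ℝ) (a b : ℝ) : Prop :=
  a ∈ A ∧ b ∈ A ∧ a < b ∧ ∀ c ∈ A, c ≤ a ∨ b ≤ c

/-- `A` is `L`-regular: some `X > 0` bounds all consecutive gaps between `X` and `L*X`. -/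
def IsRegularSet (L : ℝ) (A : Finset ℝ) : Prop :=
  ∃ X : ℝ, 0 < X ∧ ∀ a b : ℝ, ConsecIn A a b → X ≤ b - a ∧ b - a ≤ L * X

/-- `R_L(A)`: the maximum cardinality of an `L`-regular subset of `A`. -/
noncomputable def regMax (L : ℝ) (A : Finset ℝ) : ℕ :=
  (A.powerset.filter fun B => IsRegularSet L B).sup Finset.card

/-- `A` is `M`-covered: covered by consecutive intervals `[s + j*l, s + (j+1)*l)`,
each meeting `A` in at least `1` and at most `M` points. -/
def IsCovered (M : ℕ) (A : Finset ℝ) : Prop :=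
  ∃ (s l : ℝ) (k : ℕ), 0 < l ∧
    (∀ a ∈ A, ∃ j < k, s + j * l ≤ a ∧ a < s + (j + 1) * l) ∧
    ∀ j < k,
      1 ≤ (A.filter fun a => s + j * l ≤ a ∧ a < s + (j + 1) * l).card ∧
      (A.filter fun a => s + j * l ≤ a ∧ a < s + (j + 1) * l).card ≤ M

/-- Telescoping lower bound for gaps. -/
lemma tele_aux {X : ℝ} {n : ℕ} {a : Fin n → ℝ}
    (hgap : ∀ i j : Fin n, (j : ℕ) = (i : ℕ) + 1 → X ≤ a j - a i) :
    ∀ (d : ℕ) (i j : Fin n), (j : ℕ) = (i : ℕ) + d → (d : ℝ) * X ≤ a j - a i := by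
  intro d
  induction d with
  | zero =>
    intro i j hij
    have : j = i := Fin.ext (by omega)
    subst this
    simp
  | succ d IH =>
    intro i j hij
    have hj' : (i : ℕ) + d < n := by have := j.isLt; omega
    have h1 := IH i ⟨(i : ℕ) + d, hj'⟩ rfl
    have h2 := hgap ⟨(i : ℕ) + d, hj'⟩ j (by show (j : ℕ) = (i : ℕ) + d + 1; omega)
    push_cast
    linarith

/-- Greedy construction of a regular subset. -/
lemma greedy_aux {X : ℝ} (hX : 0 < X) {n : ℕ} (a : Fin n → ℝ)
    (hmono : StrictMono a)
    (hgap : ∀ i j : Fin n, (j : ℕ) = (i : ℕ) + 1 → X ≤ a j - a i ∧ a j - a i ≤ 2 * X)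
    (l : ℕ) (hl : 2 ≤ l) :
    ∀ (m : ℕ) (i : Fin n), n - (i : ℕ) ≤ m →
      ∃ S : Finset ℝ, (∀ x ∈ S, ∃ k : Fin n, a k = x) ∧ a i ∈ S ∧
        (∀ x ∈ S, a i ≤ x) ∧
        (∀ x y, ConsecIn S x y → 2 * l * X ≤ y - x ∧ y - x ≤ (2 * l + 2) * X) ∧
        n - (i : ℕ) ≤ 2 * l * S.card := by
  classical
  have htele := tele_aux (X := X) (n := n) (a := a) (fun i j h => (hgap i j h).1)
  have hl2 : (2 : ℝ) ≤ (l : ℝ) := by exact_mod_cast hl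
  intro m
  induction m with
  | zero =>
    intro i hi
    exact absurd hi (by have := i.isLt; omega)
  | succ m IH =>
    intro i hi
    by_cases hex : ∃ j : ℕ, ∃ h : j < n, (i : ℕ) < j ∧ 2 * l * X ≤ a ⟨j, h⟩ - a i
    · -- there is a next element at distance ≥ 2lX; take the least such
      obtain ⟨hj0n, hij0, hj0X⟩ := Nat.find_spec hex
      set j0 := Nat.find hex with hj0def
      have hmin : ∀ j' : ℕ, j' < j0 → ¬ ∃ h : j' < n, (i : ℕ) < j' ∧
          2 * l * X ≤ a ⟨j', h⟩ - a i := fun j' h => Nat.find_min hex h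
      -- upper bound on the jump
      have hub : a ⟨j0, hj0n⟩ - a i ≤ (2 * l + 2) * X := by
        rcases eq_or_lt_of_le (by omega : (i : ℕ) + 1 ≤ j0) with h | h
        · have := (hgap i ⟨j0, hj0n⟩ (by simpa using h.symm)).2
          nlinarith
        · have hj1n : j0 - 1 < n := by omega
          have hm1 := hmin (j0 - 1) (by omega)
          push_neg at hm1
          have h1 : a ⟨j0 - 1, hj1n⟩ - a i < 2 * l * X := hm1 hj1n (by omega)
          have h2 := (hgap ⟨j0 - 1, hj1n⟩ ⟨j0, hj0n⟩ (by simp; omega)).2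
          linarith
      -- index-count bound on the jump
      have hcount : j0 - (i : ℕ) ≤ 2 * l := by
        rcases eq_or_lt_of_le (by omega : (i : ℕ) + 1 ≤ j0) with h | h
        · omega
        · have hj1n : j0 - 1 < n := by omega
          have hm1 := hmin (j0 - 1) (by omega)
          push_neg at hm1
          have h1 : a ⟨j0 - 1, hj1n⟩ - a i < 2 * l * X := hm1 hj1n (by omega)
          have h2 := htele (j0 - 1 - (i : ℕ)) i ⟨j0 - 1, hj1n⟩ (by simp; omega)
          have h4 : ((j0 - 1 - (i : ℕ) : ℕ) : ℝ) < 2 * (l : ℝ) :=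
            lt_of_mul_lt_mul_right (by linarith) hX.le
          have h5 : j0 - 1 - (i : ℕ) < 2 * l := by exact_mod_cast h4
          omega
      -- apply the induction hypothesis at j0
      obtain ⟨S', hS'range, hS'mem, hS'low, hS'gap, hS'card⟩ :=
        IH ⟨j0, hj0n⟩ (by simp only; omega)
      have haij0 : a i < a ⟨j0, hj0n⟩ := hmono (Fin.lt_def.mpr hij0)
      have hnotmem : a i ∉ S' := fun h => absurd (hS'low _ h) (not_le.mpr haij0)
      refine ⟨insert (a i) S', ?_, Finset.mem_insert_self _ _, ?_, ?_, ?_⟩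
      · intro x hx
        rcases Finset.mem_insert.mp hx with h | h
        · exact ⟨i, h.symm⟩
        · exact hS'range x h
      · intro x hx
        rcases Finset.mem_insert.mp hx with h | h
        · exact le_of_eq h.symm
        · exact le_trans haij0.le (hS'low x h)
      · rintro x y ⟨hx, hy, hxy, hcons⟩
        by_cases hxa : x = a i
        · subst hxa
          have hyS' : y ∈ S' := by
            rcases Finset.mem_insert.mp hy with h | h
            · exact absurd hxy (by rw [h]; exact lt_irrefl _)
            · exact h
          have h1 : a ⟨j0, hj0n⟩ ≤ y := hS'low y hyS'
          have h2 : y ≤ a ⟨j0, hj0n⟩ := by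
            rcases hcons (a ⟨j0, hj0n⟩) (Finset.mem_insert_of_mem hS'mem) with h | h
            · exact absurd h (not_le.mpr haij0)
            · exact h
          have hye : y = a ⟨j0, hj0n⟩ := le_antisymm h2 h1
          rw [hye]
          exact ⟨hj0X, hub⟩
        · have hxS' : x ∈ S' := by
            rcases Finset.mem_insert.mp hx with h | h
            · exact absurd h hxa
            · exact h
          have hyS' : y ∈ S' := by
            rcases Finset.mem_insert.mp hy with h | h
            · exfalso
              have := hS'low x hxS'
              rw [h] at hxy
              linarith
            · exact h
          exact hS'gap x y ⟨hxS', hyS', hxy,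
            fun c hc => hcons c (Finset.mem_insert_of_mem hc)⟩
      · rw [Finset.card_insert_of_notMem hnotmem]
        calc n - (i : ℕ) ≤ (j0 - (i : ℕ)) + (n - j0) := by omega
          _ ≤ 2 * l + 2 * l * S'.card := Nat.add_le_add hcount hS'card
          _ = 2 * l * (S'.card + 1) := by ring
    · -- no further jump possible: take the singleton
      push_neg at hex
      refine ⟨{a i}, ?_, Finset.mem_singleton_self _, ?_, ?_, ?_⟩
      · intro x hx
        exact ⟨i, (Finset.mem_singleton.mp hx).symm⟩
      · intro x hx
        rw [Finset.mem_singleton.mp hx]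
      · rintro x y ⟨hx, hy, hxy, -⟩
        rw [Finset.mem_singleton.mp hx, Finset.mem_singleton.mp hy] at hxy
        exact absurd hxy (lt_irrefl _)
      · simp only [Finset.card_singleton, mul_one]
        rcases eq_or_lt_of_le (by have := i.isLt; omega : (i : ℕ) ≤ n - 1) with h | h
        · omega
        · have hj : n - 1 < n := by have := i.isLt; omega
          have h1 : a ⟨n - 1, hj⟩ - a i < 2 * l * X := hex (n - 1) hj (by omega)
          have h2 := htele (n - 1 - (i : ℕ)) i ⟨n - 1, hj⟩ (by simp; omega)
          have h3 : ((n - 1 - (i : ℕ) : ℕ) : ℝ) < 2 * (l : ℝ) :=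
            lt_of_mul_lt_mul_right (by linarith) hX.le
          have h4 : n - 1 - (i : ℕ) < 2 * l := by exact_mod_cast h3
          omega

/-- If `A` is `2`-regular and `l ≥ 2` is an integer, then `A` has a
`(1 + 1/l)`-regular subset `A'` with `|A'| ≥ |A| / (4l + 2)`. -/
theorem stmt0 (A : Finset ℝ) (hA : IsRegularSet 2 A) (l : ℕ) (hl : 2 ≤ l) :
    ∃ A' ⊆ A, IsRegularSet (1 + 1 / (l : ℝ)) A' ∧
      (A.card : ℝ) / (4 * l + 2) ≤ (A'.card : ℝ) := by
  classical
  obtain ⟨X, hX, hgapA⟩ := hA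
  have hlR : (0 : ℝ) < (l : ℝ) := by exact_mod_cast (by omega : 0 < l)
  rcases Nat.eq_zero_or_pos A.card with h0 | hpos
  · refine ⟨∅, Finset.empty_subset _, ⟨1, one_pos, ?_⟩, ?_⟩
    · rintro x y ⟨hx, -⟩
      simp at hx
    · rw [h0]
      simp
  · set e := A.orderIsoOfFin rfl with he
    set a : Fin A.card → ℝ := fun i => (e i : ℝ) with ha
    have hmem : ∀ i, a i ∈ A := fun i => (e i).2
    have hmono : StrictMono a := fun i j h => by
      have := e.strictMono h
      exact_mod_cast this
    have hsurj : ∀ c ∈ A, ∃ i, a i = c := fun c hc =>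
      ⟨e.symm ⟨c, hc⟩, by simp [ha]⟩
    have hconsec : ∀ i j : Fin A.card, (j : ℕ) = (i : ℕ) + 1 →
        ConsecIn A (a i) (a j) := by
      intro i j hij
      refine ⟨hmem i, hmem j, hmono (Fin.lt_def.mpr (by omega)), ?_⟩
      intro c hc
      obtain ⟨k, rfl⟩ := hsurj c hc
      rcases le_or_gt (k : ℕ) (i : ℕ) with h | h
      · exact Or.inl (hmono.monotone (Fin.le_def.mpr h))
      · exact Or.inr (hmono.monotone (Fin.le_def.mpr (by omega)))
    have hgap : ∀ i j : Fin A.card, (j : ℕ) = (i : ℕ) + 1 →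
        X ≤ a j - a i ∧ a j - a i ≤ 2 * X := fun i j h => hgapA _ _ (hconsec i j h)
    obtain ⟨S, hSr, -, -, hSgap, hScard⟩ :=
      greedy_aux hX a hmono hgap l hl A.card ⟨0, hpos⟩ (by simp)
    refine ⟨S, ?_, ?_, ?_⟩
    · intro x hx
      obtain ⟨k, rfl⟩ := hSr x hx
      exact hmem k
    · refine ⟨2 * l * X, by positivity, fun x y h => ?_⟩
      obtain ⟨h1, h2⟩ := hSgap x y h
      refine ⟨h1, ?_⟩
      have heq : (1 + 1 / (l : ℝ)) * (2 * l * X) = (2 * l + 2) * X := by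
        field_simp
      linarith
    · simp only [Fin.val_mk, Nat.sub_zero] at hScard
      rw [div_le_iff₀ (by positivity)]
      have h1 : (A.card : ℝ) ≤ 2 * l * S.card := by exact_mod_cast hScard
      have h2 : (0 : ℝ) ≤ (S.card : ℝ) := Nat.cast_nonneg _
      nlinarith
end

section
/- Let A be a finite set of real numbers which admits an M-covering for some positive integer M ≤ |A|. Then R_2(A) ≥ |A| / (3M). -/
open scoped Classical

/-- If `A` admits an `M`-covering for some positive integer `M ≤ |A|`,
then `R_2(A) ≥ |A| / (3M)`. -/
theorem stmt1 (A : Finset ℝ) (M : ℕ) (hM : 0 < M) (hMA : M ≤ A.card)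
    (hcov : IsCovered M A) :
    (A.card : ℝ) / (3 * M) ≤ (regMax 2 A : ℝ) := by
  obtain ⟨s, l, k, hl, hmem, hbound⟩ := hcov
  set S : ℕ → Finset ℝ := fun j => A.filter fun a => s + j * l ≤ a ∧ a < s + (j + 1) * l
    with hSdef
  have hSne : ∀ j < k, (S j).Nonempty := fun j hj =>
    Finset.card_pos.mp (hbound j hj).1
  set p : ℕ → ℝ := fun j => if h : (S j).Nonempty then (S j).min' h else 0 with hpdef
  have hp : ∀ j < k, p j ∈ S j := by
    intro j hj
    have h := hSne j hj
    simp only [hpdef, dif_pos h]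
    exact Finset.min'_mem _ h
  have hpA : ∀ j < k, p j ∈ A := fun j hj => (Finset.mem_filter.mp (hp j hj)).1
  have hlow : ∀ j < k, s + j * l ≤ p j := fun j hj => (Finset.mem_filter.mp (hp j hj)).2.1
  have hhigh : ∀ j < k, p j < s + (j + 1) * l := fun j hj => (Finset.mem_filter.mp (hp j hj)).2.2
  have hmono : ∀ j j', j < j' → j' < k → p j < p j' := by
    intro j j' hjj hj'
    have h1 := hhigh j (lt_trans hjj hj')
    have h2 := hlow j' hj'
    have hc : ((j : ℝ) + 1) ≤ (j' : ℝ) := by exact_mod_cast hjj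
    nlinarith
  set m := (k + 2) / 3 with hm
  have h3i : ∀ i, i < m → 3 * i < k := by intro i hi; omega
  set B : Finset ℝ := (Finset.range m).image (fun i => p (3 * i)) with hB
  have hBcard : B.card = m := by
    rw [hB, Finset.card_image_of_injOn, Finset.card_range]
    intro i hi i' hi' h
    simp only [Finset.coe_range, Set.mem_Iio] at hi hi'
    by_contra hne
    rcases Nat.lt_or_ge i i' with h1 | h1
    · exact absurd h (ne_of_lt (hmono _ _ (by omega) (h3i _ hi')))
    · exact absurd h.symm (ne_of_lt (hmono _ _ (by omega) (h3i _ hi)))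
  have hBA : B ⊆ A := by
    intro x hx
    obtain ⟨i, hi, rfl⟩ := Finset.mem_image.mp hx
    exact hpA _ (h3i i (Finset.mem_range.mp hi))
  have hreg : IsRegularSet 2 B := by
    refine ⟨2 * l, by linarith, ?_⟩
    rintro a b ⟨ha, hb, hab, hcons⟩
    obtain ⟨i, hi, rfl⟩ := Finset.mem_image.mp ha
    obtain ⟨i', hi', rfl⟩ := Finset.mem_image.mp hb
    rw [Finset.mem_range] at hi hi'
    have hii' : i < i' := by
      by_contra h
      rcases Nat.lt_or_ge i' i with h1 | h1
      · exact absurd (hmono _ _ (by omega) (h3i _ hi)) (not_lt.mpr (le_of_lt hab))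
      · have : i = i' := by omega
        subst this; exact lt_irrefl _ hab
    have hstep : i' = i + 1 := by
      by_contra h
      have h2 : i + 1 < i' := by omega
      have hmem2 : p (3 * (i + 1)) ∈ B := by
        rw [hB]; exact Finset.mem_image.mpr ⟨i + 1, Finset.mem_range.mpr (by omega), rfl⟩
      rcases hcons _ hmem2 with hc | hc
      · exact absurd (hmono (3 * i) (3 * (i + 1)) (by omega) (h3i _ (by omega)))
          (not_lt.mpr hc)
      · exact absurd (hmono (3 * (i + 1)) (3 * i') (by omega) (h3i _ hi'))
          (not_lt.mpr hc)
    subst hstep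
    have ha1 := hlow (3 * i) (h3i _ hi)
    have ha2 := hhigh (3 * i) (h3i _ hi)
    have hb1 := hlow (3 * (i + 1)) (h3i _ hi')
    have hb2 := hhigh (3 * (i + 1)) (h3i _ hi')
    push_cast at ha1 ha2 hb1 hb2
    constructor <;> nlinarith
  have hmem' : B ∈ A.powerset.filter fun C => IsRegularSet 2 C :=
    Finset.mem_filter.mpr ⟨Finset.mem_powerset.mpr hBA, hreg⟩
  have hRm : m ≤ regMax 2 A := by
    rw [← hBcard]
    exact Finset.le_sup hmem'
  have hAcard : A.card ≤ k * M := by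
    have hsub : A ⊆ (Finset.range k).biUnion S := by
      intro a ha
      obtain ⟨j, hj, h1, h2⟩ := hmem a ha
      exact Finset.mem_biUnion.mpr ⟨j, Finset.mem_range.mpr hj,
        Finset.mem_filter.mpr ⟨ha, h1, h2⟩⟩
    calc A.card ≤ ((Finset.range k).biUnion S).card := Finset.card_le_card hsub
      _ ≤ ∑ j ∈ Finset.range k, (S j).card := Finset.card_biUnion_le
      _ ≤ ∑ _j ∈ Finset.range k, M :=
          Finset.sum_le_sum fun j hj => (hbound j (Finset.mem_range.mp hj)).2
      _ = k * M := by simp [Finset.sum_const, mul_comm]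
  have hk3 : k ≤ 3 * m := by omega
  have hfinal : A.card ≤ m * (3 * M) := by
    calc A.card ≤ k * M := hAcard
      _ ≤ (3 * m) * M := Nat.mul_le_mul_right M hk3
      _ = m * (3 * M) := by ring
  rw [div_le_iff₀ (by positivity)]
  have h1 : (A.card : ℝ) ≤ (m : ℝ) * (3 * M) := by exact_mod_cast hfinal
  have h2 : (m : ℝ) ≤ (regMax 2 A : ℝ) := by exact_mod_cast hRm
  have h3 : (0 : ℝ) ≤ 3 * M := by positivity
  nlinarith
end

section
/- If a finite set A of real numbers is L-regular (for some real L ≥ 1), then A can be ⌈L⌉-covered. -/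
open scoped Classical

/-- If `A` is `L`-regular for some real `L ≥ 1`, then `A` can be `⌈L⌉`-covered. -/
theorem stmt2 (A : Finset ℝ) (L : ℝ) (hL : 1 ≤ L) (h : IsRegularSet L A) :
    IsCovered ⌈L⌉₊ A := by
  obtain ⟨X, hX, hgap⟩ := h
  rcases A.eq_empty_or_nonempty with rfl | hA
  · exact ⟨0, 1, 0, one_pos, by simp, by simp⟩
  set m := A.min' hA with hm
  set l := L * X with hldef
  have hl : 0 < l := by positivity
  -- predecessor lemma
  have hpred : ∀ b ∈ A, m < b → ∃ a, ConsecIn A a b ∧ ∀ c ∈ A, c < b → c ≤ a := by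
    intro b hb hlt
    have hS : (A.filter (· < b)).Nonempty :=
      ⟨m, Finset.mem_filter.2 ⟨A.min'_mem hA, hlt⟩⟩
    set p := (A.filter (· < b)).max' hS with hp
    have hpm := (A.filter (· < b)).max'_mem hS
    have hpA : p ∈ A := (Finset.mem_filter.1 hpm).1
    have hpb : p < b := (Finset.mem_filter.1 hpm).2
    refine ⟨p, ⟨hpA, hb, hpb, ?_⟩, ?_⟩
    · intro c hc
      rcases lt_or_ge c b with h1 | h2
      · exact Or.inl ((A.filter (· < b)).le_max' c (Finset.mem_filter.2 ⟨hc, h1⟩))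
      · exact Or.inr h2
    · intro c hc hcb
      exact (A.filter (· < b)).le_max' c (Finset.mem_filter.2 ⟨hc, hcb⟩)
  -- any two distinct elements differ by at least X
  have hgapX : ∀ a ∈ A, ∀ b ∈ A, a < b → X ≤ b - a := by
    intro a ha b hb hab
    have hmb : m < b := lt_of_le_of_lt (A.min'_le a ha) hab
    obtain ⟨p, hc, hle⟩ := hpred b hb hmb
    have h1 := (hgap p b hc).1
    have h2 := hle a ha hab
    linarith
  set f : ℝ → ℕ := fun a => ⌊(a - m) / l⌋₊ with hf
  have hfl : ∀ a ∈ A, m + (f a : ℝ) * l ≤ a ∧ a < m + ((f a : ℝ) + 1) * l := by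
    intro a ha
    have ham : m ≤ a := A.min'_le a ha
    have h0 : 0 ≤ (a - m) / l := div_nonneg (by linarith) hl.le
    constructor
    · have h1 : (f a : ℝ) ≤ (a - m) / l := Nat.floor_le h0
      have := (le_div_iff₀ hl).1 h1
      linarith
    · have h1 : (a - m) / l < (f a : ℝ) + 1 := Nat.lt_floor_add_one _
      have := (div_lt_iff₀ hl).1 h1
      linarith
  have hfmono : ∀ a b : ℝ, a ≤ b → f a ≤ f b := by
    intro a b hab
    exact Nat.floor_le_floor (by gcongr)
  have hstep : ∀ a b : ℝ, ConsecIn A a b → f b ≤ f a + 1 := by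
    intro a b hc
    have hba : b - a ≤ l := (hgap a b hc).2
    have ham : m ≤ a := A.min'_le a hc.1
    have h0 : 0 ≤ (a - m) / l := div_nonneg (by linarith) hl.le
    have h1 : (b - m) / l ≤ (a - m) / l + 1 := by
      rw [div_add' _ _ _ hl.ne']
      gcongr
      linarith
    calc f b ≤ ⌊(a - m) / l + 1⌋₊ := Nat.floor_le_floor h1
      _ = f a + 1 := Nat.floor_add_one h0
  have hfm : f m = 0 := by simp [hf]
  have hhit : ∀ j : ℕ, (∃ a ∈ A, j ≤ f a) → ∃ a ∈ A, f a = j := by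
    intro j
    induction j with
    | zero => intro _; exact ⟨m, A.min'_mem hA, hfm⟩
    | succ j ih =>
      rintro ⟨a, ha, hja⟩
      have hS : (A.filter fun x => j + 1 ≤ f x).Nonempty :=
        ⟨a, Finset.mem_filter.2 ⟨ha, hja⟩⟩
      set b := (A.filter fun x => j + 1 ≤ f x).min' hS with hb
      have hbm := (A.filter fun x => j + 1 ≤ f x).min'_mem hS
      have hbA : b ∈ A := (Finset.mem_filter.1 hbm).1
      have hbf : j + 1 ≤ f b := (Finset.mem_filter.1 hbm).2
      have hmb : m < b := by
        rcases lt_or_eq_of_le (A.min'_le b hbA) with h1 | h1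
        · exact h1
        · exfalso; rw [← h1, hfm] at hbf; omega
      obtain ⟨p, hc, _⟩ := hpred b hbA hmb
      have hpf : f p < j + 1 := by
        by_contra hcon
        push_neg at hcon
        have : b ≤ p :=
          (A.filter fun x => j + 1 ≤ f x).min'_le p (Finset.mem_filter.2 ⟨hc.1, hcon⟩)
        exact absurd hc.2.2.1 (not_lt.2 this)
      have := hstep p b hc
      exact ⟨b, hbA, by omega⟩
  set M := A.max' hA with hM
  refine ⟨m, l, f M + 1, hl, ?_, ?_⟩
  · intro a ha
    exact ⟨f a, Nat.lt_succ_of_le (hfmono a M (A.le_max' a ha)), hfl a ha⟩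
  · intro j hj
    constructor
    · obtain ⟨a, ha, hfa⟩ := hhit j ⟨M, A.max'_mem hA, Nat.lt_succ_iff.1 hj⟩
      have hmem : a ∈ A.filter fun a => m + (j : ℝ) * l ≤ a ∧ a < m + ((j : ℝ) + 1) * l := by
        refine Finset.mem_filter.2 ⟨ha, ?_⟩
        have := hfl a ha
        rw [hfa] at this
        exact this
      exact Finset.card_pos.2 ⟨a, hmem⟩
    · set B := A.filter fun a => m + (j : ℝ) * l ≤ a ∧ a < m + ((j : ℝ) + 1) * l with hB
      have hinj : ∀ a ∈ B, ∀ b ∈ B, (⌊(a - (m + j * l)) / X⌋₊ = ⌊(b - (m + j * l)) / X⌋₊) → a = b := by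
        intro a haB b hbB heq
        by_contra hne
        wlog hab : a < b generalizing a b
        · exact this b hbB a haB heq.symm (Ne.symm hne) (lt_of_le_of_ne (not_lt.1 hab) (Ne.symm hne))
        obtain ⟨haA, ha1, _⟩ := Finset.mem_filter.1 haB
        obtain ⟨hbA, hb1, _⟩ := Finset.mem_filter.1 hbB
        have hXab := hgapX a haA b hbA hab
        set t := ⌊(a - (m + j * l)) / X⌋₊ with ht
        have h0a : 0 ≤ (a - (m + j * l)) / X := div_nonneg (by linarith) hX.le
        have h1 : (t : ℝ) * X ≤ a - (m + j * l) := (le_div_iff₀ hX).1 (Nat.floor_le h0a)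
        have h2 : b - (m + j * l) < ((t : ℝ) + 1) * X := by
          have := Nat.lt_floor_add_one ((b - (m + j * l)) / X)
          rw [← heq] at this
          exact (div_lt_iff₀ hX).1 this
        nlinarith
      have hmaps : ∀ a ∈ B, ⌊(a - (m + j * l)) / X⌋₊ ∈ Finset.range ⌈L⌉₊ := by
        intro a haB
        obtain ⟨haA, ha1, ha2⟩ := Finset.mem_filter.1 haB
        rw [Finset.mem_range, Nat.lt_ceil]
        have h0a : 0 ≤ (a - (m + j * l)) / X := div_nonneg (by linarith) hX.le
        have h1 : (⌊(a - (m + j * l)) / X⌋₊ : ℝ) ≤ (a - (m + j * l)) / X := Nat.floor_le h0a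
        have h2 : (a - (m + j * l)) / X < L := by
          rw [div_lt_iff₀ hX]
          have : a < m + j * l + l := by rw [hldef] at ha2 ⊢; ring_nf at ha2 ⊢; linarith
          linarith [this]
        linarith
      calc B.card ≤ (Finset.range ⌈L⌉₊).card :=
            Finset.card_le_card_of_injOn _ hmaps hinj
        _ = ⌈L⌉₊ := Finset.card_range _
end
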